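/- The family of context-free languages is properly contained in the family SC(1,1) of languages generated by nonerasing semi-conditional grammars of degree (1,1). -/

import Mathlib

/-- Symbols: nonterminals `N` plus terminals `T`. -/
abbrev Symb (N T : Type) := N ⊕ T

/-- `alph w` is the set of symbols occurring in the string `w`. -/
def alph {α : Type} (w : List α) : Set α := {a | a ∈ w}

/-- A (nonerasing) random context grammar: finitely many productions
`(A → x, Per, For)` with `A ∈ N`, `x ∈ (N ∪ T)⁺`, `Per, For ⊆ N`. -/
structure RCG (N T : Type) where
  rules : Set (N × List (Symb N T) × Set N × Set N)
  fin : rules.Finite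
  ne : ∀ r ∈ rules, r.2.1 ≠ []
  start : N

/-- One derivation step of a random context grammar.  The flag `incl` tells whether
the rewritten symbol is included in the context check (`true`: conditions checked
against `alph (uAv)`; `false`: against `alph (uv)`). -/
def RCG.Step {N T : Type} (G : RCG N T) (incl : Bool)
    (s₁ s₂ : List (Symb N T)) : Prop :=
  ∃ A x Per For u v, (A, x, Per, For) ∈ G.rules ∧
    s₁ = u ++ Sum.inl A :: v ∧ s₂ = u ++ x ++ v ∧
    (∀ B ∈ Per, Sum.inl B ∈ alph (if incl then s₁ else u ++ v)) ∧
    (∀ B ∈ For, Sum.inl B ∉ alph (if incl then s₁ else u ++ v))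

/-- The language of a random context grammar (under the chosen derivation definition). -/
def RCG.Lang {N T : Type} (G : RCG N T) (incl : Bool) : Set (List T) :=
  {w | Relation.ReflTransGen (G.Step incl) [Sum.inl G.start] (w.map Sum.inr)}

/-- The family of random context languages over terminal alphabet `T`
(standard definition: rewritten symbol excluded from the context check). -/
def RC (T : Type) : Set (Set (List T)) :=
  {L | ∃ (N : Type) (G : RCG N T), G.Lang false = L}

/-- A (nonerasing) semi-conditional grammar of degree (1,1): productions
`(A → x, Per, For)` with `Per, For ⊆ N ∪ T` of cardinality at most one. -/
structure SCG (N T : Type) where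
  rules : Set (N × List (Symb N T) × Set (Symb N T) × Set (Symb N T))
  fin : rules.Finite
  ne : ∀ r ∈ rules, r.2.1 ≠ []
  per1 : ∀ r ∈ rules, r.2.2.1.Subsingleton
  for1 : ∀ r ∈ rules, r.2.2.2.Subsingleton
  start : N

/-- One derivation step of a semi-conditional grammar; `incl` as in `RCG.Step`. -/
def SCG.Step {N T : Type} (G : SCG N T) (incl : Bool)
    (s₁ s₂ : List (Symb N T)) : Prop :=
  ∃ A x Per For u v, (A, x, Per, For) ∈ G.rules ∧
    s₁ = u ++ Sum.inl A :: v ∧ s₂ = u ++ x ++ v ∧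
    Per ⊆ alph (if incl then s₁ else u ++ v) ∧
    (∀ a ∈ For, a ∉ alph (if incl then s₁ else u ++ v))

/-- The language of a semi-conditional grammar. -/
def SCG.Lang {N T : Type} (G : SCG N T) (incl : Bool) : Set (List T) :=
  {w | Relation.ReflTransGen (G.Step incl) [Sum.inl G.start] (w.map Sum.inr)}

/-- The family SC(1,1): inclusive derivation definition (context `alph (uAv)`). -/
def SC11 (T : Type) : Set (Set (List T)) :=
  {L | ∃ (N : Type) (G : SCG N T), G.Lang true = L}

/-- The family SC'(1,1): exclusive derivation definition (context `alph (uv)`). -/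
def SC11' (T : Type) : Set (Set (List T)) :=
  {L | ∃ (N : Type) (G : SCG N T), G.Lang false = L}

/-- The family of (nonerasing) context-free languages over `T`: languages of random
context grammars in which all permitting and forbidding sets are empty (for such
grammars the derivation relation is the context-free one). -/
def CFfam (T : Type) : Set (Set (List T)) :=
  {L | ∃ (N : Type) (G : RCG N T),
    (∀ r ∈ G.rules, r.2.2.1 = ∅ ∧ r.2.2.2 = ∅) ∧ G.Lang false = L}


namespace NotCF
open List

variable {N : Type}

/-- A context-free rule of `G` (ignoring contexts). -/
def Rul (G : RCG N Unit) (A : N) (x : List (Symb N Unit)) : Prop :=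
  ∃ P F, (A, x, P, F) ∈ G.rules

/-- Pure context-free rewriting step. -/
def CStep (G : RCG N Unit) (s t : List (Symb N Unit)) : Prop :=
  ∃ A x u v, Rul G A x ∧ s = u ++ Sum.inl A :: v ∧ t = u ++ x ++ v

/-- `n`-step derivation. -/
def DerN (G : RCG N Unit) : ℕ → List (Symb N Unit) → List (Symb N Unit) → Prop
  | 0, s, t => s = t
  | n+1, s, t => ∃ s', CStep G s s' ∧ DerN G n s' t

def Der (G : RCG N Unit) (s t : List (Symb N Unit)) : Prop := ∃ n, DerN G n s t

/-- terminal string of length `n` (over the one-letter alphabet). -/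
def tm (n : ℕ) : List (Symb N Unit) := List.replicate n (Sum.inr ())

theorem tm_append (a b : ℕ) : (tm a ++ tm b : List (Symb N Unit)) = tm (a+b) := by
  simp [tm, ← List.replicate_add]

theorem map_inr_eq_tm (w : List Unit) : (w.map Sum.inr : List (Symb N Unit)) = tm w.length := by
  induction w with
  | nil => rfl
  | cons a t ih => cases a; simp [tm, List.replicate_succ] at *; exact ih

theorem derN_refl (G : RCG N Unit) (s : List (Symb N Unit)) : DerN G 0 s s := rfl

theorem der_refl (G : RCG N Unit) (s : List (Symb N Unit)) : Der G s s := ⟨0, rfl⟩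

theorem derN_trans {G : RCG N Unit} {m n : ℕ} {s t r : List (Symb N Unit)}
    (h1 : DerN G m s t) (h2 : DerN G n t r) : DerN G (m+n) s r := by
  induction m generalizing s with
  | zero => cases h1; simpa using h2
  | succ m ih =>
    obtain ⟨s', hs, hd⟩ := h1
    rw [Nat.succ_add]
    exact ⟨s', hs, ih hd⟩

theorem der_trans {G : RCG N Unit} {s t r : List (Symb N Unit)}
    (h1 : Der G s t) (h2 : Der G t r) : Der G s r := by
  obtain ⟨m, h1⟩ := h1; obtain ⟨n, h2⟩ := h2
  exact ⟨m+n, derN_trans h1 h2⟩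

theorem cstep_append {G : RCG N Unit} {s t : List (Symb N Unit)} (p q : List (Symb N Unit))
    (h : CStep G s t) : CStep G (p ++ s ++ q) (p ++ t ++ q) := by
  obtain ⟨A, x, u, v, hr, hs, ht⟩ := h
  exact ⟨A, x, p ++ u, v ++ q, hr, by simp [hs], by simp [ht]⟩

theorem derN_context {G : RCG N Unit} {n : ℕ} {s t : List (Symb N Unit)} (p q : List (Symb N Unit))
    (h : DerN G n s t) : DerN G n (p ++ s ++ q) (p ++ t ++ q) := by
  induction n generalizing s with
  | zero => cases h; rfl
  | succ n ih =>
    obtain ⟨s', hs, hd⟩ := h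
    exact ⟨p ++ s' ++ q, cstep_append p q hs, ih hd⟩

theorem der_append {G : RCG N Unit} {s₁ t₁ s₂ t₂ : List (Symb N Unit)}
    (h1 : Der G s₁ t₁) (h2 : Der G s₂ t₂) : Der G (s₁ ++ s₂) (t₁ ++ t₂) := by
  obtain ⟨m, h1⟩ := h1; obtain ⟨n, h2⟩ := h2
  refine ⟨m + n, derN_trans (s := s₁ ++ s₂) (t := t₁ ++ s₂) ?_ ?_⟩
  · simpa using derN_context [] s₂ h1
  · simpa using derN_context t₁ [] h2

/-- Splitting a derivation of a concatenation. -/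
theorem derN_split {G : RCG N Unit} : ∀ {n : ℕ} {s t r : List (Symb N Unit)},
    DerN G n (s ++ t) r →
    ∃ n₁ n₂ r₁ r₂, n₁ + n₂ = n ∧ r = r₁ ++ r₂ ∧ DerN G n₁ s r₁ ∧ DerN G n₂ t r₂ := by
  intro n
  induction n with
  | zero => intro s t r h; cases h; exact ⟨0, 0, s, t, rfl, rfl, rfl, rfl⟩
  | succ n ih =>
    intro s t r h
    obtain ⟨s', ⟨A, x, u, v, hr, hs, ht⟩, hd⟩ := h
    rcases List.append_eq_append_iff.1 hs.symm with ⟨a', ha1, ha2⟩ | ⟨c', hc1, hc2⟩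
    · cases a' with
      | nil =>
        simp at ha1 ha2
        have hd' : DerN G n (s ++ (x ++ v)) r := by
          have hse : s' = s ++ (x ++ v) := by simp [ht, ha1]
          rwa [hse] at hd
        obtain ⟨n₁, n₂, r₁, r₂, hn, hr', h1, h2⟩ := ih hd'
        refine ⟨n₁, n₂+1, r₁, r₂, by omega, hr', h1, ?_⟩
        exact ⟨x ++ v, ⟨A, x, [], v, hr, by simp [← ha2], rfl⟩, h2⟩
      | cons h₀ tl =>
        injection ha2 with hh hv
        have hd' : DerN G n ((u ++ x ++ tl) ++ t) r := by
          have hse : s' = (u ++ x ++ tl) ++ t := by simp [ht, hv]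
          rwa [hse] at hd
        obtain ⟨n₁, n₂, r₁, r₂, hn, hr', h1, h2⟩ := ih hd'
        refine ⟨n₁+1, n₂, r₁, r₂, by omega, hr', ?_, h2⟩
        exact ⟨u ++ x ++ tl, ⟨A, x, u, tl, hr, by simp [ha1, ← hh], rfl⟩, h1⟩
    · have hd' : DerN G n (s ++ (c' ++ x ++ v)) r := by
        have hse : s' = s ++ (c' ++ x ++ v) := by simp [ht, hc1]
        rwa [hse] at hd
      obtain ⟨n₁, n₂, r₁, r₂, hn, hr', h1, h2⟩ := ih hd'
      refine ⟨n₁, n₂+1, r₁, r₂, by omega, hr', h1, ?_⟩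
      exact ⟨c' ++ x ++ v, ⟨A, x, c', v, hr, hc2, rfl⟩, h2⟩

end NotCF

namespace NotCF
variable {N : Type}

theorem derN_nil {G : RCG N Unit} : ∀ {n : ℕ} {r : List (Symb N Unit)},
    DerN G n [] r → r = [] := by
  intro n
  induction n with
  | zero => intro r h; exact h.symm
  | succ n ih =>
    rintro r ⟨s', ⟨A, x, u, v, _, hs, _⟩, _⟩
    exact absurd hs.symm (by simp)

theorem cstep_tm {G : RCG N Unit} {m : ℕ} {t : List (Symb N Unit)}
    (h : CStep G (tm m) t) : False := by
  obtain ⟨A, x, u, v, _, hs, _⟩ := h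
  have hmem : Sum.inl A ∈ (tm m : List (Symb N Unit)) := by rw [hs]; simp
  exact absurd (List.eq_of_mem_replicate hmem) (by simp)

theorem derN_tm {G : RCG N Unit} : ∀ {n m : ℕ} {r : List (Symb N Unit)},
    DerN G n (tm m) r → r = tm m := by
  intro n
  induction n with
  | zero => intro m r h; exact h.symm
  | succ n _ => rintro m r ⟨s', hstep, _⟩; exact absurd hstep cstep_tm

theorem append_eq_tm {m : ℕ} {r₁ r₂ : List (Symb N Unit)} (h : r₁ ++ r₂ = tm m) :
    ∃ m₁ m₂, m₁ + m₂ = m ∧ r₁ = tm m₁ ∧ r₂ = tm m₂ := by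
  refine ⟨r₁.length, r₂.length, ?_, ?_, ?_⟩
  · have := congrArg List.length h; simpa [tm] using this
  · refine List.eq_replicate_iff.2 ⟨rfl, fun b hb => ?_⟩
    have : b ∈ (tm m : List (Symb N Unit)) := h ▸ (List.mem_append_left _ hb)
    exact List.eq_of_mem_replicate this
  · refine List.eq_replicate_iff.2 ⟨rfl, fun b hb => ?_⟩
    have : b ∈ (tm m : List (Symb N Unit)) := h ▸ (List.mem_append_right _ hb)
    exact List.eq_of_mem_replicate this

theorem derN_split_tm {G : RCG N Unit} {n m : ℕ} {s₁ s₂ : List (Symb N Unit)}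
    (h : DerN G n (s₁ ++ s₂) (tm m)) :
    ∃ n₁ n₂ m₁ m₂, n₁ + n₂ = n ∧ m₁ + m₂ = m ∧ DerN G n₁ s₁ (tm m₁) ∧ DerN G n₂ s₂ (tm m₂) := by
  obtain ⟨n₁, n₂, r₁, r₂, hn, hr, h1, h2⟩ := derN_split h
  obtain ⟨m₁, m₂, hm, e1, e2⟩ := append_eq_tm hr.symm
  exact ⟨n₁, n₂, m₁, m₂, hn, hm, e1 ▸ h1, e2 ▸ h2⟩

/-- The set of terminal yield lengths of a symbol. -/
def Y (G : RCG N Unit) (σ : Symb N Unit) : Set ℕ := {n | Der G [σ] (tm n)}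

def pumpable (G : RCG N Unit) (σ : Symb N Unit) : Prop :=
  ∃ p q, p ∈ Y G σ ∧ q ∈ Y G σ ∧ p ≠ q

theorem Y_inr {G : RCG N Unit} {m : ℕ} (h : m ∈ Y G (Sum.inr ())) : m = 1 := by
  obtain ⟨n, h⟩ := h
  have h1 : ([Sum.inr ()] : List (Symb N Unit)) = tm 1 := rfl
  rw [h1] at h
  have h2 : (tm m : List (Symb N Unit)) = tm 1 := derN_tm h
  have := congrArg List.length h2
  simpa [tm] using this

theorem pumpable_inl {G : RCG N Unit} {σ : Symb N Unit} (h : pumpable G σ) :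
    ∃ B, σ = Sum.inl B := by
  obtain ⟨p, q, hp, hq, hne⟩ := h
  cases σ with
  | inl B => exact ⟨B, rfl⟩
  | inr a => cases a; exact absurd ((Y_inr hp).trans (Y_inr hq).symm) hne

theorem rigid_eq {G : RCG N Unit} {σ : Symb N Unit} (h : ¬ pumpable G σ)
    {p q : ℕ} (hp : p ∈ Y G σ) (hq : q ∈ Y G σ) : p = q := by
  by_contra hne; exact h ⟨p, q, hp, hq, hne⟩

theorem rigid_sInf {G : RCG N Unit} {σ : Symb N Unit} (h : ¬ pumpable G σ)
    {p : ℕ} (hp : p ∈ Y G σ) : sInf (Y G σ) = p :=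
  rigid_eq h (Nat.sInf_mem ⟨p, hp⟩) hp

/-- canonical weight of a string of symbols -/
noncomputable def wt (G : RCG N Unit) (x : List (Symb N Unit)) : ℕ :=
  (x.map fun σ => sInf (Y G σ)).sum

theorem wt_append (G : RCG N Unit) (a b : List (Symb N Unit)) :
    wt G (a ++ b) = wt G a + wt G b := by simp [wt]

theorem rigid_yield {G : RCG N Unit} : ∀ {x : List (Symb N Unit)} {n m : ℕ},
    DerN G n x (tm m) → (∀ σ ∈ x, ¬ pumpable G σ) →
    (∀ σ ∈ x, (Y G σ).Nonempty) ∧ m = wt G x := by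
  intro x
  induction x with
  | nil =>
    intro n m h _
    have := derN_nil h
    have hm : m = 0 := by
      have := congrArg List.length this; simpa [tm] using this
    exact ⟨by simp, by simp [hm, wt]⟩
  | cons σ rest ih =>
    intro n m h hrig
    obtain ⟨n₁, n₂, m₁, m₂, _, hm, h1, h2⟩ := derN_split_tm (s₁ := [σ]) h
    have hY : m₁ ∈ Y G σ := ⟨n₁, h1⟩
    obtain ⟨hne, hsum⟩ := ih h2 (fun τ ht => hrig τ (List.mem_cons_of_mem _ ht))
    constructor
    · intro τ hτ
      rcases List.mem_cons.1 hτ with rfl | ht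
      · exact ⟨m₁, hY⟩
      · exact hne τ ht
    · have : sInf (Y G σ) = m₁ := rigid_sInf (hrig σ (by simp)) hY
      simp [wt] at hsum ⊢
      omega

theorem nonempty_yield {G : RCG N Unit} : ∀ {x : List (Symb N Unit)},
    (∀ σ ∈ x, (Y G σ).Nonempty) → Der G x (tm (wt G x)) := by
  intro x
  induction x with
  | nil => exact fun _ => ⟨0, rfl⟩
  | cons σ rest ih =>
    intro h
    have h1 : Der G [σ] (tm (sInf (Y G σ))) := Nat.sInf_mem (h σ (by simp))
    have h2 : Der G rest (tm (wt G rest)) := ih (fun τ ht => h τ (List.mem_cons_of_mem _ ht))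
    have := der_append h1 h2
    rw [tm_append] at this
    simpa [wt] using this

theorem der_tm_pointwise {G : RCG N Unit} {s : List (Symb N Unit)} {m : ℕ}
    (h : Der G s (tm m)) : ∀ σ ∈ s, (Y G σ).Nonempty := by
  intro σ hσ
  obtain ⟨s₁, s₂, rfl⟩ := List.append_of_mem hσ
  obtain ⟨n, h⟩ := h
  obtain ⟨n₁, n₂, m₁, m₂, _, _, _, h2⟩ := derN_split_tm h
  obtain ⟨n₃, n₄, m₃, m₄, _, _, h3, _⟩ := derN_split_tm (s₁ := [σ]) h2
  exact ⟨m₃, n₃, h3⟩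

end NotCF

namespace NotCF
variable {N : Type}

/-- `A` derives a sentential form containing `B`, whose context derives
terminal strings of total length `c`. -/
def Emb (G : RCG N Unit) (A B : N) (c : ℕ) : Prop :=
  ∃ γ δ cγ cδ, Der G [Sum.inl A] (γ ++ Sum.inl B :: δ) ∧
    Der G γ (tm cγ) ∧ Der G δ (tm cδ) ∧ cγ + cδ = c

theorem emb_refl (G : RCG N Unit) (A : N) : Emb G A A 0 :=
  ⟨[], [], 0, 0, der_refl _ _, ⟨0, rfl⟩, ⟨0, rfl⟩, rfl⟩

theorem emb_trans {G : RCG N Unit} {A B C : N} {c d : ℕ}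
    (h1 : Emb G A B c) (h2 : Emb G B C d) : Emb G A C (c + d) := by
  obtain ⟨γ, δ, cγ, cδ, hd1, hγ, hδ, hc⟩ := h1
  obtain ⟨γ', δ', cγ', cδ', hd2, hγ', hδ', hd⟩ := h2
  refine ⟨γ ++ γ', δ' ++ δ, cγ + cγ', cδ' + cδ, ?_, ?_, ?_, by omega⟩
  · refine der_trans hd1 ?_
    have := der_append (der_refl G γ) (der_append hd2 (der_refl G δ))
    simpa using this
  · rw [← tm_append]; exact der_append hγ hγ'
  · rw [← tm_append]; exact der_append hδ' hδ

theorem emb_yield {G : RCG N Unit} {A B : N} {c m : ℕ}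
    (h : Emb G A B c) (hm : m ∈ Y G (Sum.inl B)) : c + m ∈ Y G (Sum.inl A) := by
  obtain ⟨γ, δ, cγ, cδ, hd1, hγ, hδ, hc⟩ := h
  refine der_trans hd1 ?_
  have := der_append hγ (der_append hm hδ)
  rw [tm_append, tm_append] at this
  have he : cγ + (m + cδ) = c + m := by omega
  rw [he] at this
  simpa using this

theorem emb_pow {G : RCG N Unit} {A : N} {g : ℕ} (h : Emb G A A g) :
    ∀ k, Emb G A A (k * g)
  | 0 => by simpa using emb_refl G A
  | (k+1) => by
      have := emb_trans (emb_pow h k) h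
      rwa [show k * g + g = (k+1) * g by ring] at this

/-- `A` occurs in a reachable sentential form whose context is coterminal. -/
def RC (G : RCG N Unit) (A : N) : Prop :=
  ∃ u v cu cv, Der G [Sum.inl G.start] (u ++ Sum.inl A :: v) ∧
    Der G u (tm cu) ∧ Der G v (tm cv)

open Classical in
theorem scan (G : RCG N Unit) : ∀ (x : List (Symb N Unit)),
    (∀ σ ∈ x, ¬ pumpable G σ) ∨
    (∃ α B β, x = α ++ Sum.inl B :: β ∧ pumpable G (Sum.inl B) ∧
      ∀ σ ∈ α ++ β, ¬ pumpable G σ) ∨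
    (∃ α σ β τ γ, x = α ++ σ :: (β ++ τ :: γ) ∧ pumpable G σ ∧ pumpable G τ) := by
  intro x
  induction x with
  | nil => left; simp
  | cons a t ih =>
    by_cases hp : pumpable G a
    · obtain ⟨B, rfl⟩ := pumpable_inl hp
      rcases ih with h | ⟨α, C, β, hx, hC, hr⟩ | ⟨α, σ, β, τ, γ, hx, h1, h2⟩
      · right; left; exact ⟨[], B, t, rfl, hp, by simpa using h⟩
      · right; right
        exact ⟨[], Sum.inl B, α, Sum.inl C, β, by simp [hx], hp, hC⟩
      · right; right
        exact ⟨[], Sum.inl B, α, σ, β ++ τ :: γ, by simp [hx], hp, h1⟩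
    · rcases ih with h | ⟨α, C, β, hx, hC, hr⟩ | ⟨α, σ, β, τ, γ, hx, h1, h2⟩
      · left; intro σ hσ
        rcases List.mem_cons.1 hσ with rfl | hσ
        · exact hp
        · exact h σ hσ
      · right; left
        refine ⟨a :: α, C, β, by simp [hx], hC, ?_⟩
        intro σ hσ
        rcases List.mem_cons.1 hσ with rfl | hσ
        · exact hp
        · exact hr σ hσ
      · right; right
        exact ⟨a :: α, σ, β, τ, γ, by simp [hx], h1, h2⟩

/-- The chain of pumpable nonterminals along a derivation. -/
inductive Ch (G : RCG N Unit) : N → ℕ → List (N × ℕ) → Prop where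
  | last : ∀ A x P F, (A, x, P, F) ∈ G.rules →
      (∀ σ ∈ x, ¬ pumpable G σ) → (∀ σ ∈ x, (Y G σ).Nonempty) →
      Ch G A (wt G x) []
  | cons : ∀ A x P F α B β m l, (A, x, P, F) ∈ G.rules → x = α ++ Sum.inl B :: β →
      (∀ σ ∈ α ++ β, ¬ pumpable G σ) → (∀ σ ∈ α ++ β, (Y G σ).Nonempty) →
      Ch G B m l → Ch G A (wt G (α ++ β) + m) ((A, wt G (α ++ β)) :: l)

theorem der_rule {G : RCG N Unit} {A : N} {x P F : _} (hr : (A, x, P, F) ∈ G.rules) :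
    Der G [Sum.inl A] x :=
  ⟨1, x, ⟨A, x, [], [], ⟨P, F, hr⟩, by simp, by simp⟩, rfl⟩

theorem rule_emb {G : RCG N Unit} {A B : N} {x P F α β} (hr : (A, x, P, F) ∈ G.rules)
    (hx : x = α ++ Sum.inl B :: β) (hne : ∀ σ ∈ α ++ β, (Y G σ).Nonempty) :
    Emb G A B (wt G (α ++ β)) := by
  refine ⟨α, β, wt G α, wt G β, hx ▸ der_rule hr, ?_, ?_, (wt_append G α β).symm⟩
  · exact nonempty_yield (fun σ hσ => hne σ (List.mem_append_left _ hσ))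
  · exact nonempty_yield (fun σ hσ => hne σ (List.mem_append_right _ hσ))

theorem ch_sound {G : RCG N Unit} {A : N} {m : ℕ} {l : List (N × ℕ)}
    (h : Ch G A m l) : m ∈ Y G (Sum.inl A) := by
  induction h with
  | last A x P F hr hrig hne =>
    exact der_trans (der_rule hr) (nonempty_yield hne)
  | cons A x P F α B β m l hr hx hrig hne hch ih =>
    exact emb_yield (rule_emb hr hx hne) ih

theorem ch_gain {G : RCG N Unit} {A : N} {m : ℕ} {l : List (N × ℕ)}
    (h : Ch G A m l) : ∀ e ∈ l, ∃ r ∈ G.rules, e.2 ≤ wt G r.2.1 := by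
  induction h with
  | last => simp
  | cons A x P F α B β m l hr hx hrig hne hch ih =>
    intro e he
    rcases List.mem_cons.1 he with rfl | he
    · refine ⟨(A, x, P, F), hr, ?_⟩
      have : wt G x = wt G α + (sInf (Y G (Sum.inl B)) + wt G β) := by
        rw [hx, wt_append]; simp [wt]
      have h2 := wt_append G α β
      simp only [] at *
      omega
    · exact ih e he

theorem ch_vert {G : RCG N Unit} {A : N} {m : ℕ} {l : List (N × ℕ)}
    (h : Ch G A m l) : ∀ e ∈ l, e.1 ∈ Prod.fst '' G.rules := by
  induction h with
  | last => simp
  | cons A x P F α B β m l hr hx hrig hne hch ih =>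
    intro e he
    rcases List.mem_cons.1 he with rfl | he
    · exact ⟨(A, x, P, F), hr, rfl⟩
    · exact ih e he

theorem ch_f {G : RCG N Unit} {A : N} {m : ℕ} {l : List (N × ℕ)}
    (h : Ch G A m l) : ∃ f, m = (l.map Prod.snd).sum + f ∧ ∃ r ∈ G.rules, f ≤ wt G r.2.1 := by
  induction h with
  | last A x P F hr hrig hne => exact ⟨wt G x, by simp, ⟨(A, x, P, F), hr, le_refl _⟩⟩
  | cons A x P F α B β m l hr hx hrig hne hch ih =>
    obtain ⟨f, hm, hf⟩ := ih
    exact ⟨f, by simp [hm]; omega, hf⟩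

theorem ch_get {G : RCG N Unit} {A : N} {m : ℕ} {l : List (N × ℕ)}
    (h : Ch G A m l) : ∀ i (hi : i < l.length),
    (∃ c, Emb G A (l.get ⟨i, hi⟩).1 c) ∧
    (∃ y, y ∈ Y G (Sum.inl (l.get ⟨i, hi⟩).1)) ∧
    (∀ j (hj : j < l.length), i < j →
      ∃ g, Emb G (l.get ⟨i, hi⟩).1 (l.get ⟨j, hj⟩).1 g ∧ (l.get ⟨i, hi⟩).2 ≤ g) := by
  induction h with
  | last => intro i hi; simp at hi
  | cons A x P F α B β m l hr hx hrig hne hch ih =>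
    have eAB : Emb G A B (wt G (α ++ β)) := rule_emb hr hx hne
    intro i hi
    match i with
    | 0 =>
      refine ⟨⟨0, emb_refl G A⟩, ⟨wt G (α ++ β) + m, emb_yield eAB (ch_sound hch)⟩, ?_⟩
      intro j hj hij
      match j with
      | (j'+1) =>
        simp only [List.length_cons] at hj
        have hj' : j' < l.length := by omega
        obtain ⟨⟨c, hc⟩, _, _⟩ := ih j' hj'
        refine ⟨wt G (α ++ β) + c, emb_trans eAB ?_, by simp⟩
        simpa using hc
    | (i'+1) =>
      simp only [List.length_cons] at hi
      have hi' : i' < l.length := by omega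
      obtain ⟨h1, h2, h3⟩ := ih i' hi'
      refine ⟨?_, by simpa using h2, ?_⟩
      · obtain ⟨c, hc⟩ := h1
        exact ⟨wt G (α ++ β) + c, emb_trans eAB hc⟩
      · intro j hj hij
        match j with
        | (j'+1) =>
          simp only [List.length_cons] at hj
          have hj' : j' < l.length := by omega
          have hij' : i' < j' := by omega
          obtain ⟨g, hg, hge⟩ := h3 j' hj' hij'
          exact ⟨g, by simpa using hg, by simpa using hge⟩

end NotCF

namespace NotCF
variable {N : Type}

/-- lengths of words in the witness language -/
def Epow : Set ℕ := {m | ∃ n, 1 ≤ n ∧ m = 2^n + 1}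

theorem lt_of_pow_lt {a b : ℕ} (h : (2:ℕ)^a < 2^b) : a < b :=
  (Nat.pow_lt_pow_iff_right (by norm_num)).1 h

theorem two_pow_factor {a b : ℕ} (h : a < b) : (2:ℕ)^b = 2^a * (2 * 2^(b - a - 1)) := by
  have hb : b = a + (b - a - 1) + 1 := by omega
  calc (2:ℕ)^b = 2^(a + (b-a-1) + 1) := by rw [← hb]
  _ = 2^a * (2 * 2^(b-a-1)) := by rw [pow_add, pow_succ]; ring

theorem no_rect {x d d' : ℕ} (hd : 1 ≤ d) (hd' : 1 ≤ d')
    (h0 : x ∈ Epow) (h1 : x + d ∈ Epow) (h2 : x + d' ∈ Epow) (h3 : x + d + d' ∈ Epow) :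
    False := by
  obtain ⟨a, _, ha⟩ := h0
  obtain ⟨b, _, hb⟩ := h1
  obtain ⟨c, _, hc⟩ := h2
  obtain ⟨e, _, he⟩ := h3
  have hab : a < b := lt_of_pow_lt (by omega)
  have hac : a < c := lt_of_pow_lt (by omega)
  have hae : a < e := lt_of_pow_lt (by omega)
  have key : (2:ℕ)^e + 2^a = 2^b + 2^c := by omega
  rw [two_pow_factor hab, two_pow_factor hac, two_pow_factor hae] at key
  have hpos : (0:ℕ) < 2^a := Nat.pow_pos (by norm_num)
  have key2 : 2 * 2^(e-a-1) + 1 = 2 * 2^(b-a-1) + 2 * 2^(c-a-1) := by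
    have h' : (2:ℕ)^a * (2 * 2^(e-a-1) + 1) = 2^a * (2 * 2^(b-a-1) + 2 * 2^(c-a-1)) := by
      ring_nf
      ring_nf at key
      omega
    exact Nat.eq_of_mul_eq_mul_left hpos h'
  omega

theorem pumpable_lt {G : RCG N Unit} {σ : Symb N Unit} (h : pumpable G σ) :
    ∃ p q, p ∈ Y G σ ∧ q ∈ Y G σ ∧ p < q := by
  obtain ⟨p, q, hp, hq, hne⟩ := h
  rcases hne.lt_or_gt with h' | h'
  · exact ⟨p, q, hp, hq, h'⟩
  · exact ⟨q, p, hq, hp, h'⟩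

theorem two_pump_false {G : RCG N Unit} {t₁ t₂ t₃ : List (Symb N Unit)} {σ τ : Symb N Unit}
    (hYS : Y G (Sum.inl G.start) ⊆ Epow)
    (hreach : Der G [Sum.inl G.start] (t₁ ++ σ :: (t₂ ++ τ :: t₃)))
    (hσ : pumpable G σ) (hτ : pumpable G τ)
    (h1 : ∀ ρ ∈ t₁, (Y G ρ).Nonempty) (h2 : ∀ ρ ∈ t₂, (Y G ρ).Nonempty)
    (h3 : ∀ ρ ∈ t₃, (Y G ρ).Nonempty) : False := by
  obtain ⟨p₁, q₁, hp₁, hq₁, hlt₁⟩ := pumpable_lt hσ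
  obtain ⟨p₂, q₂, hp₂, hq₂, hlt₂⟩ := pumpable_lt hτ
  have mem : ∀ y y', y ∈ Y G σ → y' ∈ Y G τ →
      (wt G t₁ + (y + (wt G t₂ + (y' + wt G t₃)))) ∈ Epow := by
    intro y y' hy hy'
    apply hYS
    refine der_trans hreach ?_
    have := der_append (nonempty_yield h1)
      (der_append hy (der_append (nonempty_yield h2) (der_append hy' (nonempty_yield h3))))
    rw [tm_append, tm_append, tm_append, tm_append] at this
    simpa using this
  have m1 := mem _ _ hp₁ hp₂
  have m2 := mem _ _ hq₁ hp₂
  have m3 := mem _ _ hp₁ hq₂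
  have m4 := mem _ _ hq₁ hq₂
  set x := wt G t₁ + (p₁ + (wt G t₂ + (p₂ + wt G t₃))) with hx
  refine no_rect (x := x) (d := q₁ - p₁) (d' := q₂ - p₂) (by omega) (by omega) m1 ?_ ?_ ?_
  · rw [show x + (q₁ - p₁) = wt G t₁ + (q₁ + (wt G t₂ + (p₂ + wt G t₃))) by omega]; exact m2
  · rw [show x + (q₂ - p₂) = wt G t₁ + (p₁ + (wt G t₂ + (q₂ + wt G t₃))) by omega]; exact m3
  · rw [show x + (q₁ - p₁) + (q₂ - p₂) = wt G t₁ + (q₁ + (wt G t₂ + (q₂ + wt G t₃))) by omega]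
    exact m4

theorem singleton_eq_append {A : N} {u v : List (Symb N Unit)} {b : Symb N Unit}
    (h : [Sum.inl A] = u ++ b :: v) : u = [] ∧ b = Sum.inl A ∧ v = [] := by
  cases u with
  | nil =>
    simp only [List.nil_append] at h
    injection h with h1 h2
    exact ⟨rfl, h1.symm, h2.symm⟩
  | cons a u' =>
    exfalso
    have hl := congrArg List.length h
    simp only [List.length_cons, List.length_append, List.length_singleton,
      List.length_nil] at hl
    omega

/-- The central extraction lemma: a terminal derivation from a reachable
nonterminal yields a pumpable chain. -/
theorem extract {G : RCG N Unit} (hYS : Y G (Sum.inl G.start) ⊆ Epow) :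
    ∀ k A m, RC G A → DerN G k [Sum.inl A] (tm m) → ∃ l, Ch G A m l := by
  intro k
  induction k using Nat.strong_induction_on with
  | _ k IH =>
    intro A m hRC hder
    match k, hder with
    | 0, hder =>
      exfalso
      have : Sum.inl A ∈ (tm m : List (Symb N Unit)) :=
        hder ▸ (by simp : Sum.inl A ∈ [Sum.inl A])
      exact absurd (List.eq_of_mem_replicate this) (by simp)
    | (k'+1), hder =>
      obtain ⟨s', ⟨A', xx, u, v, hrul, hsing, hxe⟩, hd⟩ := hder
      obtain ⟨hu, hA, hv⟩ := singleton_eq_append hsing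
      obtain rfl : A' = A := Sum.inl.inj hA
      subst hu hv
      simp only [List.nil_append, List.append_nil] at hxe
      rw [hxe] at hd
      clear hxe hsing hA
      obtain ⟨P, F, hr⟩ := hrul
      obtain ⟨u₀, v₀, cu, cv, hreach, hu₀, hv₀⟩ := hRC
      have hreach' : Der G [Sum.inl G.start] (u₀ ++ xx ++ v₀) := by
        refine der_trans hreach ?_
        have := der_append (der_refl G u₀) (der_append (der_rule hr) (der_refl G v₀))
        simpa using this
      rcases scan G xx with hall | ⟨α, B, β, hxd, hB, hrig⟩ | ⟨α, σ, β, τ, γ, hxd, h1, h2⟩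
      · obtain ⟨hne, hm⟩ := rigid_yield hd hall
        exact ⟨[], hm ▸ Ch.last A' xx P F hr hall hne⟩
      · subst hxd
        obtain ⟨n₁, n₂, m₁, m₂, hn, hm, hα, hrest⟩ := derN_split_tm hd
        obtain ⟨n₃, n₄, m₃, m₄, hn2, hm2, hBder, hβ⟩ := derN_split_tm (s₁ := [Sum.inl B]) hrest
        have hrigα : ∀ σ ∈ α, ¬ pumpable G σ := fun σ hσ => hrig σ (List.mem_append_left _ hσ)
        have hrigβ : ∀ σ ∈ β, ¬ pumpable G σ := fun σ hσ => hrig σ (List.mem_append_right _ hσ)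
        obtain ⟨hneα, hwα⟩ := rigid_yield hα hrigα
        obtain ⟨hneβ, hwβ⟩ := rigid_yield hβ hrigβ
        have hne : ∀ σ ∈ α ++ β, (Y G σ).Nonempty := by
          intro σ hσ
          rcases List.mem_append.1 hσ with h | h
          · exact hneα σ h
          · exact hneβ σ h
        have hRCB : RC G B := by
          refine ⟨u₀ ++ α, β ++ v₀, cu + wt G α, wt G β + cv, ?_, ?_, ?_⟩
          · have he : u₀ ++ (α ++ Sum.inl B :: β) ++ v₀ = (u₀ ++ α) ++ Sum.inl B :: (β ++ v₀) := by
              simp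
            rw [he] at hreach'
            exact hreach'
          · rw [← tm_append]; exact der_append hu₀ (nonempty_yield hneα)
          · rw [← tm_append]; exact der_append (nonempty_yield hneβ) hv₀
        obtain ⟨l, hch⟩ := IH n₃ (by omega) B m₃ hRCB hBder
        refine ⟨(A', wt G (α ++ β)) :: l, ?_⟩
        have := Ch.cons A' _ P F α B β m₃ l hr rfl hrig hne hch
        rwa [show wt G (α ++ β) + m₃ = m by rw [wt_append]; omega] at this
      · exfalso
        subst hxd
        have hxne : ∀ ρ ∈ α ++ σ :: (β ++ τ :: γ), (Y G ρ).Nonempty :=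
          der_tm_pointwise ⟨k', hd⟩
        have hre : u₀ ++ (α ++ σ :: (β ++ τ :: γ)) ++ v₀ =
            (u₀ ++ α) ++ σ :: (β ++ τ :: (γ ++ v₀)) := by simp
        rw [hre] at hreach'
        refine two_pump_false hYS hreach' h1 h2 ?_ ?_ ?_
        · intro ρ hρ
          rcases List.mem_append.1 hρ with h | h
          · exact der_tm_pointwise hu₀ ρ h
          · exact hxne ρ (by simp [h])
        · intro ρ hρ
          exact hxne ρ (by simp [hρ])
        · intro ρ hρ
          rcases List.mem_append.1 hρ with h | h
          · exact hxne ρ (by simp [h])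
          · exact der_tm_pointwise hv₀ ρ h

end NotCF

namespace NotCF
variable {N : Type}

theorem sum_snd_get : ∀ (l : List (N × ℕ)),
    (l.map Prod.snd).sum = ∑ i : Fin l.length, (l.get i).2 := by
  intro l
  induction l with
  | nil => simp
  | cons a t ih =>
    show a.2 + (t.map Prod.snd).sum = ∑ i : Fin (t.length+1), ((a::t).get i).2
    rw [Fin.sum_univ_succ, ih]
    congr 1

theorem ch_bound {G : RCG N Unit} {A : N} {m : ℕ} {l : List (N × ℕ)}
    (h : Ch G A m l) {M : ℕ} (hM : ∀ r ∈ G.rules, wt G r.2.1 ≤ M) :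
    m ≤ ((G.fin.image Prod.fst).toFinset.card + 1) * M ∨
    ∃ A' c' g y, Emb G A A' c' ∧ Emb G A' A' g ∧ 1 ≤ g ∧ y ∈ Y G (Sum.inl A') := by
  classical
  obtain ⟨f, hm, r₀, hr₀, hf⟩ := ch_f h
  have hfM : f ≤ M := le_trans hf (hM r₀ hr₀)
  set V := (G.fin.image Prod.fst).toFinset with hV
  set c : Fin l.length → ℕ := fun i => (l.get i).2 with hc
  have hsum : (l.map Prod.snd).sum = ∑ i, c i := sum_snd_get l
  set I : Finset (Fin l.length) := Finset.univ.filter (fun i => 1 ≤ c i) with hI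
  have hzero : ∑ i ∈ Finset.univ.filter (fun i => ¬ 1 ≤ c i), c i = 0 :=
    Finset.sum_eq_zero (fun i hi => by have := (Finset.mem_filter.1 hi).2; omega)
  have hsplit : (∑ i, c i) = (∑ i ∈ I, c i) + ∑ i ∈ Finset.univ.filter (fun i => ¬ 1 ≤ c i), c i :=
    (Finset.sum_filter_add_sum_filter_not Finset.univ (fun i => 1 ≤ c i) c).symm
  have hci : ∀ i ∈ I, c i ≤ M := by
    intro i _
    obtain ⟨r, hr, hle⟩ := ch_gain h (l.get i) (l.get_mem i)
    exact le_trans hle (hM r hr)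
  by_cases hcard : I.card ≤ V.card
  · left
    have h1 : ∑ i ∈ I, c i ≤ I.card * M := by
      have := Finset.sum_le_card_nsmul I c M hci
      simpa [smul_eq_mul] using this
    have h2 : I.card * M ≤ V.card * M := Nat.mul_le_mul_right M hcard
    have : m = (l.map Prod.snd).sum + f := hm
    have hVM : m ≤ V.card * M + M := by omega
    calc m ≤ V.card * M + M := hVM
    _ = (V.card + 1) * M := by ring
  · right
    have hmaps : ∀ i ∈ I, (l.get i).1 ∈ V := by
      intro i _
      rw [hV, Set.Finite.mem_toFinset]
      exact ch_vert h (l.get i) (l.get_mem i)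
    obtain ⟨i, hi, j, hj, hij, hveq⟩ :=
      Finset.exists_ne_map_eq_of_card_lt_of_maps_to (by omega) hmaps
    have key : ∀ (i j : Fin l.length), i ∈ I → i < j → (l.get i).1 = (l.get j).1 →
        ∃ A' c' g y, Emb G A A' c' ∧ Emb G A' A' g ∧ 1 ≤ g ∧ y ∈ Y G (Sum.inl A') := by
      intro i j hiI hlt he
      obtain ⟨h1, h2, hseg⟩ := ch_get h i.1 i.isLt
      have hc₀ : ∃ c₀, Emb G A (l.get i).1 c₀ := h1
      have hy : ∃ y, y ∈ Y G (Sum.inl (l.get i).1) := h2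
      obtain ⟨g, hg0, hge0⟩ := hseg j.1 j.isLt hlt
      have hg' : Emb G (l.get i).1 (l.get j).1 g := hg0
      have hge' : (l.get i).2 ≤ g := hge0
      obtain ⟨c₀, hc₀⟩ := hc₀
      obtain ⟨y, hy⟩ := hy
      rw [← he] at hg'
      have h1g : 1 ≤ (l.get i).2 := by
        have h' := (Finset.mem_filter.1 hiI).2
        rw [hc] at h'
        exact h'
      exact ⟨(l.get i).1, c₀, g, y, hc₀, hg', by omega, hy⟩
    rcases hij.lt_or_gt with hlt | hlt
    · exact key i j hi hlt hveq
    · exact key j i hj hlt hveq.symm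

theorem L_not_CF : {w : List Unit | ∃ n, 1 ≤ n ∧ w.length = 2^n + 1} ∉ CFfam Unit := by
  rintro ⟨N, G, hctx, hLang⟩
  have fwd : ∀ {s t : List (Symb N Unit)},
      Relation.ReflTransGen (G.Step false) s t → Der G s t := by
    intro s t h
    induction h with
    | refl => exact der_refl G s
    | tail h1 h2 ih =>
      refine der_trans ih ?_
      obtain ⟨A, x, P, F, u, v, hr, hs, ht, _, _⟩ := h2
      exact ⟨1, _, ⟨A, x, u, v, ⟨P, F, hr⟩, hs, ht⟩, rfl⟩
  have bwd : ∀ {s t : List (Symb N Unit)},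
      Der G s t → Relation.ReflTransGen (G.Step false) s t := by
    rintro s t ⟨n, h⟩
    induction n generalizing s with
    | zero => exact h ▸ Relation.ReflTransGen.refl
    | succ n ih =>
      obtain ⟨s', ⟨A, x, u, v, ⟨P, F, hr⟩, hs, ht⟩, hd⟩ := h
      refine Relation.ReflTransGen.head ?_ (ih hd)
      have hPF := hctx _ hr
      refine ⟨A, x, P, F, u, v, hr, hs, ht, ?_, ?_⟩
      · have : P = ∅ := hPF.1
        simp [this]
      · have : F = ∅ := hPF.2
        simp [this]
  have hYS : Y G (Sum.inl G.start) = Epow := by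
    ext m
    constructor
    · intro hm
      have hw : (List.replicate m () : List Unit) ∈ G.Lang false := by
        show Relation.ReflTransGen _ _ _
        have he : ((List.replicate m ()).map Sum.inr : List (Symb N Unit)) = tm m := by
          rw [map_inr_eq_tm]; simp
        rw [he]
        exact bwd hm
      rw [hLang] at hw
      obtain ⟨n, hn, hlen⟩ := hw
      exact ⟨n, hn, by simpa using hlen⟩
    · rintro ⟨n, hn, rfl⟩
      have hw : (List.replicate (2^n+1) () : List Unit) ∈ G.Lang false := by
        rw [hLang]; exact ⟨n, hn, by simp⟩
      have hd := fwd hw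
      rwa [show ((List.replicate (2^n+1) ()).map Sum.inr : List (Symb N Unit)) = tm (2^n+1) from
        by rw [map_inr_eq_tm]; simp] at hd
  have hWfin : ((fun r => wt G r.2.1) '' G.rules).Finite := G.fin.image _
  obtain ⟨M, hM⟩ := hWfin.bddAbove
  have hM' : ∀ r ∈ G.rules, wt G r.2.1 ≤ M := fun r hr => hM (Set.mem_image_of_mem _ hr)
  set Q := ((G.fin.image Prod.fst).toFinset.card + 1) * M with hQ
  set K := Q + 1 with hK
  have hKm : 2^K + 1 ∈ Y G (Sum.inl G.start) := by rw [hYS]; exact ⟨K, by omega, rfl⟩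
  obtain ⟨k, hder⟩ := hKm
  have hRCS : RC G G.start :=
    ⟨[], [], 0, 0, by simpa using der_refl G [Sum.inl G.start], ⟨0, rfl⟩, ⟨0, rfl⟩⟩
  obtain ⟨l, hch⟩ := extract hYS.subset k G.start (2^K+1) hRCS hder
  rcases ch_bound hch hM' with hb | ⟨A', c', g, y, e1, e2, hg, hy⟩
  · have h2K : K < 2^K := Nat.lt_two_pow_self
    omega
  · have hmem : ∀ j : ℕ, c' + (j*g + y) ∈ Epow := fun j =>
      hYS.subset (emb_yield e1 (emb_yield (emb_pow e2 j) hy))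
    refine no_rect (x := c' + y) (d := g) (d' := g) hg hg ?_ ?_ ?_ ?_
    · rw [show c' + y = c' + (0*g + y) by ring]; exact hmem 0
    · rw [show c' + y + g = c' + (1*g + y) by ring]; exact hmem 1
    · rw [show c' + y + g = c' + (1*g + y) by ring]; exact hmem 1
    · rw [show c' + y + g + g = c' + (2*g + y) by ring]; exact hmem 2

end NotCF

theorem cf_subset_sc11 (T : Type) : CFfam T ⊆ SC11 T := by
  rintro L ⟨N, G, hctx, rfl⟩
  classical
  refine ⟨N, ⟨(fun r => (r.1, r.2.1, (∅ : Set (Symb N T)), (∅ : Set (Symb N T)))) '' G.rules,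
    G.fin.image _, ?_, ?_, ?_, G.start⟩, ?_⟩
  · rintro r ⟨r₀, hr₀, rfl⟩
    exact G.ne r₀ hr₀
  · rintro r ⟨r₀, hr₀, rfl⟩
    exact Set.subsingleton_empty
  · rintro r ⟨r₀, hr₀, rfl⟩
    exact Set.subsingleton_empty
  · ext w
    show Relation.ReflTransGen _ _ _ ↔ Relation.ReflTransGen _ _ _
    constructor
    · refine fun hh => Relation.ReflTransGen.mono ?_ _ _ hh
      rintro s t ⟨A, x, Per, For, u, v, ⟨⟨A₀, x₀, P₀, F₀⟩, hr₀, heq⟩, hs, ht, hPer, hFor⟩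
      obtain ⟨h1, h2, h3, h4⟩ : A₀ = A ∧ x₀ = x ∧ (∅ : Set (Symb N T)) = Per ∧
          (∅ : Set (Symb N T)) = For := by
        simpa [Prod.ext_iff] using heq
      rw [← h1] at hs
      rw [← h2] at ht
      refine ⟨A₀, x₀, P₀, F₀, u, v, hr₀, hs, ht, ?_, ?_⟩
      · have : P₀ = ∅ := (hctx _ hr₀).1
        simp [this]
      · have : F₀ = ∅ := (hctx _ hr₀).2
        simp [this]
    · refine fun hh => Relation.ReflTransGen.mono ?_ _ _ hh
      rintro s t ⟨A, x, Per, For, u, v, hr, hs, ht, hPer, hFor⟩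
      exact ⟨A, x, ∅, ∅, u, v, ⟨(A, x, Per, For), hr, rfl⟩, hs, ht, by simp, by simp⟩

namespace SCW

inductive NT | S | P1 | P2 | F | A | B
deriving DecidableEq

abbrev Sym := Symb NT Unit

def nS : Sym := Sum.inl NT.S
def nP1 : Sym := Sum.inl NT.P1
def nP2 : Sym := Sum.inl NT.P2
def nF : Sym := Sum.inl NT.F
def nA : Sym := Sum.inl NT.A
def nB : Sym := Sum.inl NT.B
def ta : Sym := Sum.inr ()

def rules : Set (NT × List Sym × Set Sym × Set Sym) :=
  {(NT.S, [nP2, nB, nB], ∅, ∅),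
   (NT.A, [nB, nB], {nP1}, ∅),
   (NT.P1, [nP2], ∅, {nA}),
   (NT.B, [nA], {nP2}, ∅),
   (NT.P2, [nP1], ∅, {nB}),
   (NT.P2, [nF], ∅, {nB}),
   (NT.A, [ta], {nF}, ∅),
   (NT.F, [ta], ∅, {nA})}

theorem rules_fin : rules.Finite := by
  unfold rules
  repeat apply Set.Finite.insert
  exact Set.finite_singleton _

def G : SCG NT Unit where
  rules := rules
  fin := rules_fin
  ne := by
    intro r hr
    simp only [rules, Set.mem_insert_iff, Set.mem_singleton_iff] at hr
    rcases hr with rfl | rfl | rfl | rfl | rfl | rfl | rfl | rfl <;> simp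
  per1 := by
    intro r hr
    simp only [rules, Set.mem_insert_iff, Set.mem_singleton_iff] at hr
    rcases hr with rfl | rfl | rfl | rfl | rfl | rfl | rfl | rfl <;>
      first
        | exact Set.subsingleton_empty
        | exact Set.subsingleton_singleton
  for1 := by
    intro r hr
    simp only [rules, Set.mem_insert_iff, Set.mem_singleton_iff] at hr
    rcases hr with rfl | rfl | rfl | rfl | rfl | rfl | rfl | rfl <;>
      first
        | exact Set.subsingleton_empty
        | exact Set.subsingleton_singleton
  start := NT.S

def DerS := Relation.ReflTransGen (G.Step true)

/-- sentential forms: marker, then `i` A's, `j` B's, `k` a's -/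
def mk (m : Sym) (i j k : ℕ) : List Sym :=
  m :: (List.replicate i nA ++ List.replicate j nB ++ List.replicate k ta)

theorem mem_rules_1 : (NT.S, [nP2, nB, nB], (∅ : Set Sym), (∅ : Set Sym)) ∈ G.rules := by
  simp [G, rules]
theorem mem_rules_2 : (NT.A, [nB, nB], ({nP1} : Set Sym), (∅ : Set Sym)) ∈ G.rules := by
  simp [G, rules]
theorem mem_rules_3 : (NT.P1, [nP2], (∅ : Set Sym), ({nA} : Set Sym)) ∈ G.rules := by
  simp [G, rules]
theorem mem_rules_4 : (NT.B, [nA], ({nP2} : Set Sym), (∅ : Set Sym)) ∈ G.rules := by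
  simp [G, rules]
theorem mem_rules_5 : (NT.P2, [nP1], (∅ : Set Sym), ({nB} : Set Sym)) ∈ G.rules := by
  simp [G, rules]
theorem mem_rules_6 : (NT.P2, [nF], (∅ : Set Sym), ({nB} : Set Sym)) ∈ G.rules := by
  simp [G, rules]
theorem mem_rules_7 : (NT.A, [ta], ({nF} : Set Sym), (∅ : Set Sym)) ∈ G.rules := by
  simp [G, rules]
theorem mem_rules_8 : (NT.F, [ta], (∅ : Set Sym), ({nA} : Set Sym)) ∈ G.rules := by
  simp [G, rules]

theorem step_d1 (i j : ℕ) : G.Step true (mk nP1 (i+1) j 0) (mk nP1 i (j+2) 0) := by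
  refine ⟨NT.A, [nB, nB], {nP1}, ∅, nP1 :: List.replicate i nA, List.replicate j nB,
    mem_rules_2, ?_, ?_, ?_, by simp⟩
  · simp [mk, List.replicate_succ', nA]
  · simp [mk, List.replicate_succ, List.replicate_succ']
  · intro x hx
    simp only [Set.mem_singleton_iff] at hx
    subst hx
    simp [alph, mk, nA, nB, nP1, nP2, nF, ta, List.mem_replicate]

theorem step_d2 (j : ℕ) : G.Step true (mk nP1 0 j 0) (mk nP2 0 j 0) := by
  refine ⟨NT.P1, [nP2], ∅, {nA}, [], List.replicate j nB, mem_rules_3, ?_, ?_, by simp, ?_⟩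
  · simp [mk, nP1]
  · simp [mk, nP2]
  · intro x hx
    simp only [Set.mem_singleton_iff] at hx
    subst hx
    simp [alph, mk, nA, nB, nP1, nP2, nF, ta, List.mem_replicate]

theorem step_d3 (i j : ℕ) : G.Step true (mk nP2 i (j+1) 0) (mk nP2 (i+1) j 0) := by
  refine ⟨NT.B, [nA], {nP2}, ∅, nP2 :: List.replicate i nA, List.replicate j nB,
    mem_rules_4, ?_, ?_, ?_, by simp⟩
  · simp [mk, List.replicate_succ, nB]
  · simp [mk, List.replicate_succ', nA]
  · intro x hx
    simp only [Set.mem_singleton_iff] at hx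
    subst hx
    simp [alph, mk, nA, nB, nP1, nP2, nF, ta, List.mem_replicate]

theorem step_d4 (i : ℕ) : G.Step true (mk nP2 i 0 0) (mk nP1 i 0 0) := by
  refine ⟨NT.P2, [nP1], ∅, {nB}, [], List.replicate i nA, mem_rules_5, ?_, ?_, by simp, ?_⟩
  · simp [mk, nP2]
  · simp [mk, nP1]
  · intro x hx
    simp only [Set.mem_singleton_iff] at hx
    subst hx
    simp [alph, mk, nA, nB, nP1, nP2, nF, ta, List.mem_replicate]

theorem step_d5 (i : ℕ) : G.Step true (mk nP2 i 0 0) (mk nF i 0 0) := by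
  refine ⟨NT.P2, [nF], ∅, {nB}, [], List.replicate i nA, mem_rules_6, ?_, ?_, by simp, ?_⟩
  · simp [mk, nP2]
  · simp [mk, nF]
  · intro x hx
    simp only [Set.mem_singleton_iff] at hx
    subst hx
    simp [alph, mk, nA, nB, nP1, nP2, nF, ta, List.mem_replicate]

theorem step_d6 (i k : ℕ) : G.Step true (mk nF (i+1) 0 k) (mk nF i 0 (k+1)) := by
  refine ⟨NT.A, [ta], {nF}, ∅, nF :: List.replicate i nA, List.replicate k ta,
    mem_rules_7, ?_, ?_, ?_, by simp⟩
  · simp [mk, List.replicate_succ', nA]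
  · simp [mk, List.replicate_succ, List.replicate_succ']
  · intro x hx
    simp only [Set.mem_singleton_iff] at hx
    subst hx
    simp [alph, mk, nA, nB, nP1, nP2, nF, ta, List.mem_replicate]

theorem step_d7 (k : ℕ) : G.Step true (mk nF 0 0 k) (List.replicate (k+1) ta) := by
  refine ⟨NT.F, [ta], ∅, {nA}, [], List.replicate k ta, mem_rules_8, ?_, ?_, by simp, ?_⟩
  · simp [mk, nF]
  · simp [List.replicate_succ]
  · intro x hx
    simp only [Set.mem_singleton_iff] at hx
    subst hx
    simp [alph, mk, nA, nB, nP1, nP2, nF, ta, List.mem_replicate]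

theorem step_d0 : G.Step true [nS] (mk nP2 0 2 0) := by
  refine ⟨NT.S, [nP2, nB, nB], ∅, ∅, [], [], mem_rules_1, ?_, ?_, by simp, by simp⟩
  · simp [nS]
  · simp [mk, List.replicate_succ]

end SCW

namespace SCW

theorem derS_refl (s : List Sym) : DerS s s := Relation.ReflTransGen.refl

theorem derS_step {s t : List Sym} (h : G.Step true s t) : DerS s t :=
  Relation.ReflTransGen.single h

theorem derS_trans {s t r : List Sym} (h1 : DerS s t) (h2 : DerS t r) : DerS s r :=
  Relation.ReflTransGen.trans h1 h2

theorem derA : ∀ i j, DerS (mk nP1 i j 0) (mk nP1 0 (j + 2*i) 0) := by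
  intro i
  induction i with
  | zero => intro j; simpa using derS_refl _
  | succ i ih =>
    intro j
    refine derS_trans (derS_step (step_d1 i j)) ?_
    have := ih (j+2)
    rwa [show j + 2 + 2*i = j + 2*(i+1) by ring] at this

theorem derB : ∀ j i, DerS (mk nP2 i j 0) (mk nP2 (i + j) 0 0) := by
  intro j
  induction j with
  | zero => intro i; simpa using derS_refl _
  | succ j ih =>
    intro i
    refine derS_trans (derS_step (step_d3 i j)) ?_
    have := ih (i+1)
    rwa [show i + 1 + j = i + (j+1) by ring] at this

theorem derF : ∀ i k, DerS (mk nF i 0 k) (mk nF 0 0 (k + i)) := by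
  intro i
  induction i with
  | zero => intro k; simpa using derS_refl _
  | succ i ih =>
    intro k
    refine derS_trans (derS_step (step_d6 i k)) ?_
    have := ih (k+1)
    rwa [show k + 1 + i = k + (i+1) by ring] at this

theorem loop (c : ℕ) : DerS (mk nP2 c 0 0) (mk nP2 (2*c) 0 0) := by
  refine derS_trans (derS_step (step_d4 c)) ?_
  refine derS_trans (derA c 0) ?_
  refine derS_trans (derS_step (step_d2 (0 + 2*c))) ?_
  have := derB (0 + 2*c) 0
  rwa [show 0 + (0 + 2*c) = 2*c by ring] at this

theorem pow_der : ∀ n, DerS [nS] (mk nP2 (2^(n+1)) 0 0) := by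
  intro n
  induction n with
  | zero =>
    refine derS_trans (derS_step step_d0) ?_
    simpa using derB 2 0
  | succ n ih =>
    refine derS_trans ih ?_
    have := loop (2^(n+1))
    rwa [show 2 * 2^(n+1) = 2^(n+2) by ring] at this

theorem finish (c : ℕ) : DerS (mk nP2 c 0 0) (List.replicate (c+1) ta) := by
  refine derS_trans (derS_step (step_d5 c)) ?_
  refine derS_trans (derF c 0) ?_
  simpa using derS_step (step_d7 (0 + c))

theorem complete (n : ℕ) : DerS [nS] (List.replicate (2^(n+1) + 1) ta) :=
  derS_trans (pow_der n) (finish (2^(n+1)))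

end SCW

namespace SCW

/-- count with decidable equality (avoiding `BEq`) -/
def cnt (σ : Sym) : List Sym → ℕ
  | [] => 0
  | b :: t => cnt σ t + (if b = σ then 1 else 0)

theorem cnt_append (σ : Sym) (s t : List Sym) : cnt σ (s ++ t) = cnt σ s + cnt σ t := by
  induction s with
  | nil => simp [cnt]
  | cons b s ih => simp [cnt, ih]; omega

theorem cnt_zero_not_mem {σ : Sym} {s : List Sym} (h : cnt σ s = 0) : σ ∉ s := by
  induction s with
  | nil => simp
  | cons b t ih =>
    simp [cnt] at h
    rcases h with ⟨h1, h2⟩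
    simp [ih h1]
    intro he
    exact absurd (he ▸ h2) (by simp)

theorem cnt_of_not_mem {σ : Sym} {s : List Sym} (h : σ ∉ s) : cnt σ s = 0 := by
  induction s with
  | nil => rfl
  | cons b t ih =>
    simp at h
    push_neg at h
    simp [cnt, ih h.2]
    exact fun he => absurd he.symm h.1

def Inv (s : List Sym) : Prop :=
  s = [nS] ∨
  (cnt nS s = 0 ∧
   ((cnt nP1 s = 1 ∧ cnt nP2 s = 0 ∧ cnt nF s = 0 ∧ cnt ta s = 0 ∧
      ∃ k, 2 ≤ k ∧ 2 * cnt nA s + cnt nB s = 2^k) ∨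
    (cnt nP2 s = 1 ∧ cnt nP1 s = 0 ∧ cnt nF s = 0 ∧ cnt ta s = 0 ∧
      ∃ k, 1 ≤ k ∧ cnt nA s + cnt nB s = 2^k) ∨
    (cnt nF s = 1 ∧ cnt nP1 s = 0 ∧ cnt nP2 s = 0 ∧ cnt nB s = 0 ∧
      ∃ k, 1 ≤ k ∧ cnt nA s + cnt ta s = 2^k) ∨
    (cnt nP1 s = 0 ∧ cnt nP2 s = 0 ∧ cnt nF s = 0 ∧ cnt nA s = 0 ∧ cnt nB s = 0 ∧
      ∃ k, 1 ≤ k ∧ cnt ta s = 2^k + 1)))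

theorem inv_step {s₁ s₂ : List Sym} (h : G.Step true s₁ s₂) (hI : Inv s₁) : Inv s₂ := by
  obtain ⟨A, x, Per, For, u, v, hr, hs, ht, hPer, hFor⟩ := h
  have hr' : (A, x, Per, For) ∈ rules := hr
  simp only [rules, Set.mem_insert_iff, Set.mem_singleton_iff, Prod.mk.injEq] at hr'
  subst hs ht
  rcases hr' with ⟨rfl,rfl,rfl,rfl⟩|⟨rfl,rfl,rfl,rfl⟩|⟨rfl,rfl,rfl,rfl⟩|⟨rfl,rfl,rfl,rfl⟩|
    ⟨rfl,rfl,rfl,rfl⟩|⟨rfl,rfl,rfl,rfl⟩|⟨rfl,rfl,rfl,rfl⟩|⟨rfl,rfl,rfl,rfl⟩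
  -- rule 1 : S → P2 B B
  · rcases hI with hI | ⟨hS, _⟩
    · obtain ⟨hu, _, hv⟩ := NotCF.singleton_eq_append (hI.symm)
      subst hu hv
      refine Or.inr ⟨?_, Or.inr (Or.inl ⟨?_, ?_, ?_, ?_, ⟨1, le_refl 1, ?_⟩⟩)⟩ <;>
        simp [cnt, nS, nP1, nP2, nF, nA, nB, ta]
    · exfalso
      have : Sum.inl NT.S ∈ u ++ Sum.inl NT.S :: v := by simp
      exact absurd this (cnt_zero_not_mem (σ := nS) (by simpa [nS] using hS))
  -- rule 2 : A → B B  (permitting P1)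
  · rcases hI with hI | ⟨hS, hI⟩
    · obtain ⟨_, hb, _⟩ := NotCF.singleton_eq_append (hI.symm)
      simp [nS] at hb
    · have hp : nP1 ∈ u ++ Sum.inl NT.A :: v := hPer rfl
      rcases hI with ⟨h1,h2,h3,h4,k,hk,he⟩ | ⟨h1,h2,h3,h4,k,hk,he⟩ |
        ⟨h1,h2,h3,h4,k,hk,he⟩ | ⟨h1,h2,h3,h4,h5,k,hk,he⟩
      · refine Or.inr ⟨?_, Or.inl ⟨?_, ?_, ?_, ?_, ⟨k, hk, ?_⟩⟩⟩ <;>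
          (simp [cnt, cnt_append, nS, nP1, nP2, nF, nA, nB, ta] at hS h1 h2 h3 h4 he ⊢ <;> omega)
      · exact absurd hp (cnt_zero_not_mem h2)
      · exact absurd hp (cnt_zero_not_mem h2)
      · exact absurd hp (cnt_zero_not_mem h1)
  -- rule 3 : P1 → P2  (forbidding A)
  · rcases hI with hI | ⟨hS, hI⟩
    · obtain ⟨_, hb, _⟩ := NotCF.singleton_eq_append (hI.symm)
      simp [nS] at hb
    · have hp : nP1 ∈ u ++ Sum.inl NT.P1 :: v := by simp [nP1]
      have hA0 : cnt nA (u ++ Sum.inl NT.P1 :: v) = 0 :=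
        cnt_of_not_mem (hFor nA rfl)
      rcases hI with ⟨h1,h2,h3,h4,k,hk,he⟩ | ⟨h1,h2,h3,h4,k,hk,he⟩ |
        ⟨h1,h2,h3,h4,k,hk,he⟩ | ⟨h1,h2,h3,h4,h5,k,hk,he⟩
      · refine Or.inr ⟨?_, Or.inr (Or.inl ⟨?_, ?_, ?_, ?_, ⟨k, by omega, ?_⟩⟩)⟩ <;>
          (simp [cnt, cnt_append, nS, nP1, nP2, nF, nA, nB, ta] at hS h1 h2 h3 h4 he hA0 ⊢ <;> omega)
      · exact absurd hp (cnt_zero_not_mem h2)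
      · exact absurd hp (cnt_zero_not_mem h2)
      · exact absurd hp (cnt_zero_not_mem h1)
  -- rule 4 : B → A  (permitting P2)
  · rcases hI with hI | ⟨hS, hI⟩
    · obtain ⟨_, hb, _⟩ := NotCF.singleton_eq_append (hI.symm)
      simp [nS] at hb
    · have hp : nP2 ∈ u ++ Sum.inl NT.B :: v := hPer rfl
      rcases hI with ⟨h1,h2,h3,h4,k,hk,he⟩ | ⟨h1,h2,h3,h4,k,hk,he⟩ |
        ⟨h1,h2,h3,h4,k,hk,he⟩ | ⟨h1,h2,h3,h4,h5,k,hk,he⟩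
      · exact absurd hp (cnt_zero_not_mem h2)
      · refine Or.inr ⟨?_, Or.inr (Or.inl ⟨?_, ?_, ?_, ?_, ⟨k, hk, ?_⟩⟩)⟩ <;>
          (simp [cnt, cnt_append, nS, nP1, nP2, nF, nA, nB, ta] at hS h1 h2 h3 h4 he ⊢ <;> omega)
      · exact absurd hp (cnt_zero_not_mem h3)
      · exact absurd hp (cnt_zero_not_mem h2)
  -- rule 5 : P2 → P1  (forbidding B)
  · rcases hI with hI | ⟨hS, hI⟩
    · obtain ⟨_, hb, _⟩ := NotCF.singleton_eq_append (hI.symm)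
      simp [nS] at hb
    · have hp : nP2 ∈ u ++ Sum.inl NT.P2 :: v := by simp [nP2]
      have hB0 : cnt nB (u ++ Sum.inl NT.P2 :: v) = 0 :=
        cnt_of_not_mem (hFor nB rfl)
      rcases hI with ⟨h1,h2,h3,h4,k,hk,he⟩ | ⟨h1,h2,h3,h4,k,hk,he⟩ |
        ⟨h1,h2,h3,h4,k,hk,he⟩ | ⟨h1,h2,h3,h4,h5,k,hk,he⟩
      · exact absurd hp (cnt_zero_not_mem h2)
      · refine Or.inr ⟨?_, Or.inl ⟨?_, ?_, ?_, ?_, ⟨k+1, by omega, ?_⟩⟩⟩ <;>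
          ((try rw [show (2:ℕ)^(k+1) = 2 * 2^k by ring])
           simp [cnt, cnt_append, nS, nP1, nP2, nF, nA, nB, ta] at hS h1 h2 h3 h4 he hB0 ⊢ <;>
             omega)
      · exact absurd hp (cnt_zero_not_mem h3)
      · exact absurd hp (cnt_zero_not_mem h2)
  -- rule 6 : P2 → F  (forbidding B)
  · rcases hI with hI | ⟨hS, hI⟩
    · obtain ⟨_, hb, _⟩ := NotCF.singleton_eq_append (hI.symm)
      simp [nS] at hb
    · have hp : nP2 ∈ u ++ Sum.inl NT.P2 :: v := by simp [nP2]
      have hB0 : cnt nB (u ++ Sum.inl NT.P2 :: v) = 0 :=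
        cnt_of_not_mem (hFor nB rfl)
      rcases hI with ⟨h1,h2,h3,h4,k,hk,he⟩ | ⟨h1,h2,h3,h4,k,hk,he⟩ |
        ⟨h1,h2,h3,h4,k,hk,he⟩ | ⟨h1,h2,h3,h4,h5,k,hk,he⟩
      · exact absurd hp (cnt_zero_not_mem h2)
      · refine Or.inr ⟨?_, Or.inr (Or.inr (Or.inl ⟨?_, ?_, ?_, ?_, ⟨k, hk, ?_⟩⟩))⟩ <;>
          (simp [cnt, cnt_append, nS, nP1, nP2, nF, nA, nB, ta] at hS h1 h2 h3 h4 he hB0 ⊢ <;> omega)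
      · exact absurd hp (cnt_zero_not_mem h3)
      · exact absurd hp (cnt_zero_not_mem h2)
  -- rule 7 : A → a  (permitting F)
  · rcases hI with hI | ⟨hS, hI⟩
    · obtain ⟨_, hb, _⟩ := NotCF.singleton_eq_append (hI.symm)
      simp [nS] at hb
    · have hp : nF ∈ u ++ Sum.inl NT.A :: v := hPer rfl
      rcases hI with ⟨h1,h2,h3,h4,k,hk,he⟩ | ⟨h1,h2,h3,h4,k,hk,he⟩ |
        ⟨h1,h2,h3,h4,k,hk,he⟩ | ⟨h1,h2,h3,h4,h5,k,hk,he⟩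
      · exact absurd hp (cnt_zero_not_mem h3)
      · exact absurd hp (cnt_zero_not_mem h3)
      · refine Or.inr ⟨?_, Or.inr (Or.inr (Or.inl ⟨?_, ?_, ?_, ?_, ⟨k, hk, ?_⟩⟩))⟩ <;>
          (simp [cnt, cnt_append, nS, nP1, nP2, nF, nA, nB, ta] at hS h1 h2 h3 h4 he ⊢ <;> omega)
      · exact absurd hp (cnt_zero_not_mem h3)
  -- rule 8 : F → a  (forbidding A)
  · rcases hI with hI | ⟨hS, hI⟩
    · obtain ⟨_, hb, _⟩ := NotCF.singleton_eq_append (hI.symm)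
      simp [nS] at hb
    · have hp : nF ∈ u ++ Sum.inl NT.F :: v := by simp [nF]
      have hA0 : cnt nA (u ++ Sum.inl NT.F :: v) = 0 :=
        cnt_of_not_mem (hFor nA rfl)
      rcases hI with ⟨h1,h2,h3,h4,k,hk,he⟩ | ⟨h1,h2,h3,h4,k,hk,he⟩ |
        ⟨h1,h2,h3,h4,k,hk,he⟩ | ⟨h1,h2,h3,h4,h5,k,hk,he⟩
      · exact absurd hp (cnt_zero_not_mem h3)
      · exact absurd hp (cnt_zero_not_mem h3)
      · refine Or.inr ⟨?_, Or.inr (Or.inr (Or.inr ⟨?_, ?_, ?_, ?_, ?_, ⟨k, hk, ?_⟩⟩))⟩ <;>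
          (simp [cnt, cnt_append, nS, nP1, nP2, nF, nA, nB, ta] at hS h1 h2 h3 h4 he hA0 ⊢ <;> omega)
      · exact absurd hp (cnt_zero_not_mem h3)

end SCW

namespace SCW

theorem inv_of_der {s t : List Sym} (h : DerS s t) (hs : Inv s) : Inv t := by
  induction h with
  | refl => exact hs
  | tail _ hstep ih => exact inv_step hstep ih

theorem cnt_map_inr_inl (w : List Unit) (X : NT) :
    cnt (Sum.inl X) (w.map Sum.inr) = 0 :=
  cnt_of_not_mem (by simp)

theorem cnt_map_inr_ta (w : List Unit) : cnt ta (w.map Sum.inr) = w.length := by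
  induction w with
  | nil => rfl
  | cons b t ih => cases b; simp [cnt, ta] at ih ⊢; omega

theorem lang_char : G.Lang true = {w : List Unit | ∃ n, 1 ≤ n ∧ w.length = 2^n + 1} := by
  ext w
  constructor
  · intro hw
    have hInv : Inv (w.map Sum.inr) := inv_of_der hw (Or.inl rfl)
    rcases hInv with h | ⟨hS, h⟩
    · exfalso
      have hm : nS ∈ w.map Sum.inr := by rw [h]; simp
      obtain ⟨x, _, hx⟩ := List.mem_map.1 hm
      simp [nS] at hx
    · rcases h with ⟨h1,_⟩|⟨h1,_⟩|⟨h1,_⟩|⟨_,_,_,_,_,k,hk,he⟩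
      · exfalso
        have := cnt_map_inr_inl w NT.P1
        rw [show (Sum.inl NT.P1 : Sym) = nP1 from rfl] at this
        omega
      · exfalso
        have := cnt_map_inr_inl w NT.P2
        rw [show (Sum.inl NT.P2 : Sym) = nP2 from rfl] at this
        omega
      · exfalso
        have := cnt_map_inr_inl w NT.F
        rw [show (Sum.inl NT.F : Sym) = nF from rfl] at this
        omega
      · have := cnt_map_inr_ta w
        exact ⟨k, hk, by omega⟩
  · rintro ⟨n, hn, hlen⟩
    show Relation.ReflTransGen _ _ _
    have hmap : w.map Sum.inr = List.replicate (2^n + 1) ta := by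
      have hw : w = List.replicate (2^n + 1) () := by
        refine List.eq_replicate_iff.2 ⟨hlen, fun b _ => rfl⟩
      rw [hw, List.map_replicate]
      rfl
    rw [hmap]
    have hc := complete (n - 1)
    rw [show n - 1 + 1 = n by omega] at hc
    exact hc

theorem L_in_SC11 : {w : List Unit | ∃ n, 1 ≤ n ∧ w.length = 2^n + 1} ∈ SC11 Unit :=
  ⟨NT, G, lang_char⟩

end SCW


/-- CF ⊊ SC(1,1): every (nonerasing) context-free language is in
SC(1,1), and some SC(1,1) language is not context-free. -/
theorem cf_proper_subset_sc11 :
    (∀ T : Type, CFfam T ⊆ SC11 T) ∧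
    (∃ (T : Type) (L : Set (List T)), L ∈ SC11 T ∧ L ∉ CFfam T) :=
  ⟨cf_subset_sc11,
    ⟨Unit, {w : List Unit | ∃ n, 1 ≤ n ∧ w.length = 2^n + 1}, SCW.L_in_SC11, NotCF.L_not_CF⟩⟩
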